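/- (Lyapunov drift condition / Foster's criterion for the joint chain.) Let V(ỹ,q) = (q − ỹ)/(μ − λ) on 𝕏. Then for every state ψ = (ỹ,q) ∈ 𝕏 with q > 1, the one-step drift satisfies ∑_{ψ'∈𝕏} P(ψ,ψ')·V(ψ') − V(ψ) = −1; moreover there exists b < ∞ such that for every ψ = (ỹ,q) ∈ 𝕏, ∑_{ψ'∈𝕏} P(ψ,ψ')·V(ψ') − V(ψ) ≤ −1 + b·1[q ≤ 1]. -/

import Mathlib

open scoped BigOperators

noncomputable section

/-- The state space `𝕏 = {(0,q) : q ∈ ℕ} ∪ {(1,q) : q ≥ 1}` of the joint chain,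
with the departure indicator encoded as a `Bool`. -/
abbrev XS : Type := {p : Bool × ℕ // p.1 = true → 1 ≤ p.2}

/-- `ρ = λμ̄/(λ̄μ)`. -/
def rho (lam mu : ℝ) : ℝ := lam * (1 - mu) / ((1 - lam) * mu)

/-- The invariant distribution `π_Q` of the queue-length chain. -/
def piQ (lam mu : ℝ) (q : ℕ) : ℝ :=
  if q = 0 then ((1 - lam) * mu - lam * (1 - mu)) / mu
  else ((1 - lam) * mu - lam * (1 - mu)) / (mu * (1 - mu)) * rho lam mu ^ q

/-- The queue kernel `K` on ℕ. -/
def kerQ (lam mu : ℝ) (q q' : ℕ) : ℝ :=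
  if q = 0 then (if q' = 1 then lam else if q' = 0 then 1 - lam else 0)
  else if q' + 1 = q then (1 - lam) * mu
  else if q' = q + 1 then lam * (1 - mu)
  else if q' = q then 1 - lam * (1 - mu) - (1 - lam) * mu
  else 0

/-- The invariant distribution `π_Ψ` of the joint chain `(ỹ, q)`. -/
def piPsi (lam mu : ℝ) : Bool × ℕ → ℝ
  | (false, 0) => piQ lam mu 0
  | (false, q + 1) => (1 - mu) * piQ lam mu (q + 1)
  | (true, 0) => 0
  | (true, q + 1) => mu * piQ lam mu (q + 1)

/-- The transition kernel `P` of the joint chain: from `(ỹ,q)`, with arrival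
`x̃ = q' - q + ỹ ∈ {0,1}` (probability `λ` resp. `λ̄`), the next state is `(ỹ',q')`
with departure probability `1,0` at `q' = 0` and `μ̄, μ` at `q' ≥ 1`. -/
def kerP (lam mu : ℝ) (ψ ψ' : Bool × ℕ) : ℝ :=
  (if ((ψ'.2 : ℤ) - (ψ.2 : ℤ) + (if ψ.1 then 1 else 0)) = 1 then lam
   else if ((ψ'.2 : ℤ) - (ψ.2 : ℤ) + (if ψ.1 then 1 else 0)) = 0 then 1 - lam
   else 0) *
  (if ψ'.2 = 0 then (if ψ'.1 then 0 else 1) else (if ψ'.1 then mu else 1 - mu))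

/-- The `i`-step kernel `P^i` of the joint chain. -/
def kerIter (lam mu : ℝ) : ℕ → Bool × ℕ → Bool × ℕ → ℝ
  | 0, ψ, ψ' => if ψ = ψ' then 1 else 0
  | i + 1, ψ, ψ' => ∑' ψ'' : XS, kerIter lam mu i ψ ψ''.val * kerP lam mu ψ''.val ψ'

/-- The information-density function `f` on the joint state space. -/
def fInfo (lam mu : ℝ) : Bool × ℕ → ℝ
  | (false, 0) => Real.log (1 / (1 - lam))
  | (false, _ + 1) => Real.log ((1 - mu) / (1 - lam))
  | (true, 0) => 0
  | (true, _ + 1) => Real.log (mu / lam)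

/-- The binary entropy function. -/
def Hbin (p : ℝ) : ℝ := -(p * Real.log p) - (1 - p) * Real.log (1 - p)

/-- The capacity `C = H(λ) - (λ/μ) H(μ)` of the timing channel. -/
def Cap (lam mu : ℝ) : ℝ := Hbin lam - lam / mu * Hbin mu

/-- The constant `c_{M0}`. -/
def cM0 (lam mu : ℝ) : ℝ :=
  (1 - lam) / (1 - mu) *
    (mu * Real.log (mu / lam) + (1 - mu) * Real.log ((1 - mu) / (1 - lam)) - Cap lam mu)

/-- The constant `c_{M̃}`. -/
def cMt (lam mu : ℝ) : ℝ :=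
  cM0 lam mu / mu + (Cap lam mu - Real.log (mu / lam)) * piQ lam mu 0 / (1 - mu)

/-- The partial stationary sum `M(q,0) = ∑_{ψ' ∈ 𝕏, q' ≤ q} (C - f(ψ')) π_Ψ(ψ')`. -/
def M0 (lam mu : ℝ) (q : ℕ) : ℝ :=
  ∑' ψ : {p : Bool × ℕ // (p.1 = true → 1 ≤ p.2) ∧ p.2 ≤ q},
    (Cap lam mu - fInfo lam mu ψ.val) * piPsi lam mu ψ.val

/-- The partial stationary sum
`M(q,1) = ∑_{ψ' ∈ 𝕏 : q' < q, or q' = q and ỹ' = 1} (C - f(ψ')) π_Ψ(ψ')`. -/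
def M1 (lam mu : ℝ) (q : ℕ) : ℝ :=
  ∑' ψ : {p : Bool × ℕ // (p.1 = true → 1 ≤ p.2) ∧ (p.2 < q ∨ (p.2 = q ∧ p.1 = true))},
    (Cap lam mu - fInfo lam mu ψ.val) * piPsi lam mu ψ.val

/-- `r(ψ,i) = ∑_{ψ' ∈ 𝕏} (f(ψ') - C) π_Ψ(ψ') P^i(ψ',ψ)`. -/
def rfun (lam mu : ℝ) (i : ℕ) (ψ : Bool × ℕ) : ℝ :=
  ∑' ψ' : XS, (fInfo lam mu ψ'.val - Cap lam mu) * piPsi lam mu ψ'.val *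
    kerIter lam mu i ψ'.val ψ

/-- `R(ψ) = ∑_{i=0}^∞ r(ψ,i)`. -/
def Rfun (lam mu : ℝ) (ψ : Bool × ℕ) : ℝ := ∑' i : ℕ, rfun lam mu i ψ

/-- The stationary autocovariance
`Cov_i = ∑_{ψ,ψ' ∈ 𝕏} π_Ψ(ψ)(f(ψ)-C)(f(ψ')-C) P^i(ψ,ψ')`. -/
def covI (lam mu : ℝ) (i : ℕ) : ℝ :=
  ∑' p : XS × XS,
    piPsi lam mu p.1.val * (fInfo lam mu p.1.val - Cap lam mu) *
      (fInfo lam mu p.2.val - Cap lam mu) * kerIter lam mu i p.1.val p.2.val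

/-- The Lyapunov function `V(ỹ,q) = (q - ỹ)/(μ - λ)`. -/
def Vlya (lam mu : ℝ) (ψ : Bool × ℕ) : ℝ :=
  ((ψ.2 : ℝ) - (if ψ.1 then 1 else 0)) / (mu - lam)

/-- Stationary path probability `ℙ_n` for block length `n = m+1`:
`π_Ψ(ψ_0) ∏_{l=0}^{n-2} P(ψ_l, ψ_{l+1})`. -/
def pathP (lam mu : ℝ) (m : ℕ) (ψ : Fin (m + 1) → XS) : ℝ :=
  piPsi lam mu (ψ 0).val * ∏ l : Fin m, kerP lam mu (ψ l.castSucc).val (ψ l.succ).val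

/-- The partial sum `S_n = ∑_{i=0}^{n-1} f(ψ_i)` along a path, for `n = m+1`. -/
def Spath (lam mu : ℝ) (m : ℕ) (ψ : Fin (m + 1) → XS) : ℝ :=
  ∑ i : Fin (m + 1), fInfo lam mu (ψ i).val

/-- `Var_n = ∑_paths ℙ_n(path) (S_n - nC)^2`, for `n = m+1`. -/
def VarN (lam mu : ℝ) (m : ℕ) : ℝ :=
  ∑' ψ : Fin (m + 1) → XS,
    pathP lam mu m ψ * (Spath lam mu m ψ - ((m : ℝ) + 1) * Cap lam mu) ^ 2

/-- The explicit stationary variance `V₀` of `f`. -/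
def V0 (lam mu : ℝ) : ℝ :=
  Real.log (1 / (1 - lam)) ^ 2 * piQ lam mu 0 +
    Real.log (mu / lam) ^ 2 * mu * (1 - piQ lam mu 0) +
    Real.log ((1 - mu) / (1 - lam)) ^ 2 * (1 - mu) * (1 - piQ lam mu 0) -
    Cap lam mu ^ 2

/-- The explicit sum of autocovariances `Σ = ∑_{i=0}^∞ Cov_i`. -/
def SigSum (lam mu : ℝ) : ℝ :=
  Real.log (1 / (1 - lam)) *
      (-(cMt lam mu) * rho lam mu / (1 - rho lam mu) - cM0 lam mu * rho lam mu) +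
    Real.log (mu / lam) * cM0 lam mu * rho lam mu / (1 - rho lam mu) +
    Real.log ((1 - mu) / (1 - lam)) * (rho lam mu / (1 - rho lam mu)) *
      (cMt lam mu - rho lam mu * cM0 lam mu)

/-- The asymptotic standard deviation `σ = √(-V₀ + 2Σ)`. -/
def sigmaBE (lam mu : ℝ) : ℝ := Real.sqrt (-(V0 lam mu) + 2 * SigSum lam mu)

/-- The standard normal cumulative distribution function `Φ`. -/
def stdNormCDF (x : ℝ) : ℝ :=
  (Real.sqrt (2 * Real.pi))⁻¹ * ∫ t in Set.Iic x, Real.exp (-(t ^ 2) / 2)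

/-- Single-step departure probability `w(ỹ|q)` (queues that have gone negative,
which can only happen on a zero-probability trajectory, are treated like `q = 0`). -/
def wdep (mu : ℝ) (y : Bool) (q : ℤ) : ℝ :=
  if q ≤ 0 then (if y then 0 else 1) else (if y then mu else 1 - mu)

/-- The queue trajectory `q_i = q_{i-1} + x̃_i - ỹ_{i-1}`, with arrivals `x̃_i = x i`
for `i ≥ 1` and departures `ỹ_i = y i`. -/
def qtraj (q0 : ℕ) (x y : ℕ → Bool) : ℕ → ℤ
  | 0 => (q0 : ℤ)
  | i + 1 => qtraj q0 x y i + (if x (i + 1) then 1 else 0) - (if y i then 1 else 0)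

/-- The block channel `W(y|x) = ∏_{i=0}^{n-1} w(ỹ_i|q_i)` of the queue channel. -/
def Wchan (mu : ℝ) (n : ℕ) (q0 : ℕ) (x y : ℕ → Bool) : ℝ :=
  ∏ i ∈ Finset.range n, wdep mu (y i) (qtraj q0 x y i)

/-- The input distribution `P_X(q_0, x̃) = π_Q(q_0) ∏_{i=1}^{n-1} λ^{x̃_i} λ̄^{1-x̃_i}`. -/
def inpP (lam mu : ℝ) (n : ℕ) (q0 : ℕ) (x : ℕ → Bool) : ℝ :=
  piQ lam mu q0 * ∏ i ∈ Finset.range (n - 1), (if x (i + 1) then lam else 1 - lam)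

/-- Extend an arrival word `(x̃_1, …, x̃_m) ∈ {0,1}^m` to a function on ℕ. -/
def extX (m : ℕ) (xf : Fin m → Bool) : ℕ → Bool :=
  fun i => if h : 1 ≤ i ∧ i ≤ m then xf ⟨i - 1, by omega⟩ else false

/-- Extend an output word `(ỹ_0, …, ỹ_{n-1}) ∈ {0,1}^n` to a function on ℕ. -/
def extY (n : ℕ) (yf : Fin n → Bool) : ℕ → Bool :=
  fun i => if h : i < n then yf ⟨i, h⟩ else false

end

lemma kerP_mul_zero (lam mu : ℝ) (y b1 : Bool) (q a b2 : ℕ)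
    (ha : (q : ℤ) = a + (if y then 1 else 0)) (h1 : b2 ≠ a) (h2 : b2 ≠ a + 1) (r : ℝ) :
    kerP lam mu (y, q) (b1, b2) * r = 0 := by
  have c1 : ((b2 : ℤ) - (q : ℤ) + (if y then 1 else 0)) ≠ 1 := by
    rcases y <;> simp_all <;> omega
  have c0 : ((b2 : ℤ) - (q : ℤ) + (if y then 1 else 0)) ≠ 0 := by
    rcases y <;> simp_all <;> omega
  simp [kerP, c1, c0]

lemma kerP_eval0 (lam mu : ℝ) (y b1 : Bool) (q a : ℕ)
    (ha : (q : ℤ) = a + (if y then 1 else 0)) :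
    kerP lam mu (y, q) (b1, a) =
      (1 - lam) * (if a = 0 then (if b1 then 0 else 1) else (if b1 then mu else 1 - mu)) := by
  have c0 : ((a : ℤ) - (q : ℤ) + (if y then 1 else 0)) = 0 := by
    rcases y <;> simp_all
  have c1 : ((a : ℤ) - (q : ℤ) + (if y then 1 else 0)) ≠ 1 := by omega
  simp [kerP, c0, c1]

lemma kerP_eval1 (lam mu : ℝ) (y b1 : Bool) (q a : ℕ)
    (ha : (q : ℤ) = a + (if y then 1 else 0)) :
    kerP lam mu (y, q) (b1, a + 1) =
      lam * (if b1 then mu else 1 - mu) := by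
  have c1 : ((a : ℤ) + 1) - (q : ℤ) + (if y then 1 else 0) = 1 := by
    rcases y <;> simp_all <;> omega
  simp [kerP, c1]

lemma tsum_drift_pos (lam mu : ℝ) (hml : lam < mu) (y : Bool) (q a : ℕ)
    (ha : (q : ℤ) = a + (if y then 1 else 0)) (ha1 : 1 ≤ a) :
    (∑' ψ' : XS, kerP lam mu (y, q) ψ'.val * Vlya lam mu ψ'.val) =
      (a : ℝ) / (mu - lam) - 1 := by
  have hne : mu - lam ≠ 0 := by linarith
  have ha0 : a ≠ 0 := by omega
  set e1 : XS := ⟨(false, a), by simp⟩ with he1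
  set e2 : XS := ⟨(true, a), fun _ => ha1⟩ with he2
  set e3 : XS := ⟨(false, a + 1), by simp⟩ with he3
  set e4 : XS := ⟨(true, a + 1), fun _ => by omega⟩ with he4
  rw [tsum_eq_sum (s := {e1, e2, e3, e4}) ?_]
  · have d12 : e1 ∉ ({e2, e3, e4} : Finset XS) := by
      simp [he1, he2, he3, he4, Subtype.ext_iff]
    have d23 : e2 ∉ ({e3, e4} : Finset XS) := by
      simp [he2, he3, he4, Subtype.ext_iff]
    have d34 : e3 ∉ ({e4} : Finset XS) := by
      simp [he3, he4, Subtype.ext_iff]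
    rw [Finset.sum_insert d12, Finset.sum_insert d23, Finset.sum_insert d34,
      Finset.sum_singleton]
    simp only [he1, he2, he3, he4]
    rw [kerP_eval0 lam mu y false q a ha, kerP_eval0 lam mu y true q a ha,
      kerP_eval1 lam mu y false q a ha, kerP_eval1 lam mu y true q a ha]
    simp only [Vlya, ha0, if_false, if_true, ite_false, ite_true]
    push_cast
    field_simp
    ring
  · rintro ⟨⟨b1, b2⟩, hbb⟩ hb
    simp only [Finset.mem_insert, Finset.mem_singleton, he1, he2, he3, he4,
      Subtype.ext_iff, Prod.mk.injEq, not_or] at hb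
    have hb2 : b2 ≠ a ∧ b2 ≠ a + 1 := by
      rcases b1 <;> simp_all
    exact kerP_mul_zero lam mu y b1 q a b2 ha hb2.1 hb2.2 _

lemma tsum_drift_zero (lam mu : ℝ) (hml : lam < mu) (y : Bool) (q : ℕ)
    (ha : (q : ℤ) = (if y then 1 else 0)) :
    (∑' ψ' : XS, kerP lam mu (y, q) ψ'.val * Vlya lam mu ψ'.val) =
      lam * (1 - mu) / (mu - lam) := by
  have hne : mu - lam ≠ 0 := by linarith
  have ha' : (q : ℤ) = (0 : ℕ) + (if y then 1 else 0) := by simpa using ha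
  set e1 : XS := ⟨(false, 0), by simp⟩ with he1
  set e3 : XS := ⟨(false, 1), by simp⟩ with he3
  set e4 : XS := ⟨(true, 1), fun _ => le_refl 1⟩ with he4
  rw [tsum_eq_sum (s := {e1, e3, e4}) ?_]
  · have d13 : e1 ∉ ({e3, e4} : Finset XS) := by
      simp [he1, he3, he4, Subtype.ext_iff]
    have d34 : e3 ∉ ({e4} : Finset XS) := by
      simp [he3, he4, Subtype.ext_iff]
    rw [Finset.sum_insert d13, Finset.sum_insert d34, Finset.sum_singleton]
    simp only [he1, he3, he4]
    rw [kerP_eval0 lam mu y false q 0 ha',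
      show ((1 : ℕ)) = 0 + 1 from rfl,
      kerP_eval1 lam mu y false q 0 ha', kerP_eval1 lam mu y true q 0 ha']
    simp only [Vlya, if_true, if_false, ite_true, ite_false]
    push_cast
    field_simp
    ring
  · rintro ⟨⟨b1, b2⟩, hbb⟩ hb
    simp only [Finset.mem_insert, Finset.mem_singleton, he1, he3, he4,
      Subtype.ext_iff, Prod.mk.injEq, not_or] at hb
    have hb2 : b2 ≠ 0 ∧ b2 ≠ 1 := by
      rcases b1 <;> simp_all <;> omega
    exact kerP_mul_zero lam mu y b1 q 0 b2 ha' hb2.1 hb2.2 _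

lemma drift_eq_pos (lam mu : ℝ) (hml : lam < mu) (y : Bool) (q a : ℕ)
    (ha : (q : ℤ) = a + (if y then 1 else 0)) (ha1 : 1 ≤ a) :
    (∑' ψ' : XS, kerP lam mu (y, q) ψ'.val * Vlya lam mu ψ'.val) -
      Vlya lam mu (y, q) = -1 := by
  rw [tsum_drift_pos lam mu hml y q a ha ha1]
  have hq : (q : ℝ) = (a : ℝ) + (if y then 1 else 0) := by
    rcases y <;> simp_all <;> exact_mod_cast ha
  simp only [Vlya, hq]
  rcases y <;> simp <;> ring

/-- Lyapunov drift condition / Foster's criterion: for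
`V(ỹ,q) = (q - ỹ)/(μ - λ)`, the drift `∑_{ψ'∈𝕏} P(ψ,ψ') V(ψ') - V(ψ)` equals `-1`
whenever `q > 1`, and is `≤ -1 + b·1[q ≤ 1]` everywhere on `𝕏` for some `b < ∞`. -/
theorem foster_criterion (lam mu : ℝ) (h0 : 0 < lam) (h1 : lam < mu) (h2 : mu < 1) :
    (∀ ψ : XS, 1 < ψ.val.2 →
      (∑' ψ' : XS, kerP lam mu ψ.val ψ'.val * Vlya lam mu ψ'.val) - Vlya lam mu ψ.val = -1) ∧
    ∃ b : ℝ, ∀ ψ : XS,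
      (∑' ψ' : XS, kerP lam mu ψ.val ψ'.val * Vlya lam mu ψ'.val) - Vlya lam mu ψ.val ≤
        -1 + b * (if ψ.val.2 ≤ 1 then 1 else 0) := by
  have hne : mu - lam ≠ 0 := by linarith
  have hpos : 0 < mu - lam := by linarith
  constructor
  · rintro ⟨⟨y, q⟩, hy⟩ hq
    have hq' : 1 < q := hq
    rcases y with _ | _
    · exact drift_eq_pos lam mu h1 false q q (by simp) (by omega)
    · have h1q : 1 ≤ q := hy rfl
      exact drift_eq_pos lam mu h1 true q (q - 1) (by simp; omega) (by omega)
  · refine ⟨1 + lam * (1 - mu) / (mu - lam), ?_⟩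
    have hb0 : 0 ≤ 1 + lam * (1 - mu) / (mu - lam) := by
      have : 0 ≤ lam * (1 - mu) / (mu - lam) :=
        div_nonneg (mul_nonneg h0.le (by linarith)) hpos.le
      linarith
    rintro ⟨⟨y, q⟩, hy⟩
    rcases y with _ | _
    · rcases Nat.eq_zero_or_pos q with h | h
      · subst h
        rw [tsum_drift_zero lam mu h1 false 0 (by simp)]
        simp [Vlya]
      · rw [drift_eq_pos lam mu h1 false q q (by simp) h]
        split_ifs <;> nlinarith
    · have h1q : 1 ≤ q := hy rfl
      rcases Nat.lt_or_ge q 2 with h | h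
      · have hq1 : q = 1 := by omega
        subst hq1
        rw [tsum_drift_zero lam mu h1 true 1 (by simp)]
        simp [Vlya]
      · rw [drift_eq_pos lam mu h1 true q (q - 1) (by simp; omega) (by omega)]
        split_ifs <;> nlinarith
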